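/- The subspace F̃ satisfies: (1) F̃ = (F̃ ∩ V₁) ⊕ (F̃ ∩ V₂); (2) F̃ = (F̃ ∩ W₁) ⊕ (F̃ ∩ W₂); (3) for all i, j ∈ {1,2}, F̃ = (F̃ ∩ V_i) ⊕ (F̃ ∩ W_j). -/
import Mathlib


open Submodule

/-- The decreasing sequence of subspaces `F̃(n)`:
`F̃(0) = E`, `F̃(n+1) = ∩_{i,j} ((F̃(n) ∩ Vᵢ) + (F̃(n) ∩ Wⱼ))`. -/
noncomputable def FTilde {K E : Type*} [Field K] [AddCommGroup E] [Module K E]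
    (V W : Fin 2 → Submodule K E) : ℕ → Submodule K E
  | 0 => ⊤
  | n + 1 => ⨅ i : Fin 2, ⨅ j : Fin 2, (FTilde V W n ⊓ V i) ⊔ (FTilde V W n ⊓ W j)

/-- `F̃ = (F̃ ∩ V₁) ⊕ (F̃ ∩ V₂) = (F̃ ∩ W₁) ⊕ (F̃ ∩ W₂) = (F̃ ∩ Vᵢ) ⊕ (F̃ ∩ Wⱼ)`. -/
theorem stmt3 {K E : Type*} [Field K] [AddCommGroup E] [Module K E]
    [FiniteDimensional K E] (hchar : (2 : K) ≠ 0)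
    (V W : Fin 2 → Submodule K E)
    (hV : IsCompl (V 0) (V 1)) (hW : IsCompl (W 0) (W 1))
    (Ft : Submodule K E) (hFt : Ft = ⨅ n : ℕ, FTilde V W n) :
    (Disjoint (Ft ⊓ V 0) (Ft ⊓ V 1) ∧ (Ft ⊓ V 0) ⊔ (Ft ⊓ V 1) = Ft) ∧
    (Disjoint (Ft ⊓ W 0) (Ft ⊓ W 1) ∧ (Ft ⊓ W 0) ⊔ (Ft ⊓ W 1) = Ft) ∧
    (∀ i j : Fin 2, Disjoint (Ft ⊓ V i) (Ft ⊓ W j) ∧ (Ft ⊓ V i) ⊔ (Ft ⊓ W j) = Ft) := by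
  -- the sequence is antitone
  have hsucc : ∀ n, FTilde V W (n + 1) ≤ FTilde V W n := by
    intro n
    show (⨅ i : Fin 2, ⨅ j : Fin 2, (FTilde V W n ⊓ V i) ⊔ (FTilde V W n ⊓ W j)) ≤ _
    refine le_trans (le_trans (iInf_le _ 0) (iInf_le _ 0)) ?_
    exact sup_le inf_le_left inf_le_left
  have hanti : Antitone (FTilde V W) := antitone_nat_of_succ_le hsucc
  -- stabilization
  obtain ⟨N, hN⟩ := IsArtinian.monotone_stabilizes (R := K) (M := E)
    ⟨fun n => OrderDual.toDual (FTilde V W n), fun a b h => hanti h⟩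
  have hFtN : Ft = FTilde V W N := by
    rw [hFt]
    apply le_antisymm (iInf_le _ N)
    refine le_iInf fun n => ?_
    rcases le_total n N with h | h
    · exact hanti h
    · exact le_of_eq (hN n h)
  have key : ∀ i j : Fin 2, (Ft ⊓ V i) ⊔ (Ft ⊓ W j) = Ft := by
    intro i j
    have h1 : FTilde V W N = FTilde V W (N + 1) := hN (N + 1) (Nat.le_succ N)
    have h2 : Ft ≤ (Ft ⊓ V i) ⊔ (Ft ⊓ W j) := by
      conv_lhs => rw [hFtN, h1]
      show (⨅ i : Fin 2, ⨅ j : Fin 2, (FTilde V W N ⊓ V i) ⊔ (FTilde V W N ⊓ W j)) ≤ _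
      rw [← hFtN]
      exact le_trans (iInf_le _ i) (iInf_le _ j)
    exact le_antisymm (sup_le inf_le_left inf_le_left) h2
  have hAB0 : (Ft ⊓ V 0) ⊓ (Ft ⊓ V 1) = ⊥ := by
    rw [← le_bot_iff]
    calc (Ft ⊓ V 0) ⊓ (Ft ⊓ V 1) ≤ V 0 ⊓ V 1 := inf_le_inf inf_le_right inf_le_right
    _ = ⊥ := hV.inf_eq_bot
  have hBB0 : (Ft ⊓ W 0) ⊓ (Ft ⊓ W 1) = ⊥ := by
    rw [← le_bot_iff]
    calc (Ft ⊓ W 0) ⊓ (Ft ⊓ W 1) ≤ W 0 ⊓ W 1 := inf_le_inf inf_le_right inf_le_right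
    _ = ⊥ := hW.inf_eq_bot
  have eqij : ∀ i j : Fin 2,
      Module.finrank K Ft + Module.finrank K ((Ft ⊓ V i) ⊓ (Ft ⊓ W j) : Submodule K E)
      = Module.finrank K (Ft ⊓ V i : Submodule K E)
        + Module.finrank K (Ft ⊓ W j : Submodule K E) := by
    intro i j
    have := Submodule.finrank_sup_add_finrank_inf_eq (Ft ⊓ V i) (Ft ⊓ W j)
    rwa [key i j] at this
  have hvsum : Module.finrank K (Ft ⊓ V 0 : Submodule K E)
      + Module.finrank K (Ft ⊓ V 1 : Submodule K E) ≤ Module.finrank K Ft := by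
    have h := Submodule.finrank_sup_add_finrank_inf_eq (Ft ⊓ V 0) (Ft ⊓ V 1)
    rw [hAB0, finrank_bot, Nat.add_zero] at h
    rw [← h]
    exact Submodule.finrank_mono (sup_le inf_le_left inf_le_left)
  have hwsum : Module.finrank K (Ft ⊓ W 0 : Submodule K E)
      + Module.finrank K (Ft ⊓ W 1 : Submodule K E) ≤ Module.finrank K Ft := by
    have h := Submodule.finrank_sup_add_finrank_inf_eq (Ft ⊓ W 0) (Ft ⊓ W 1)
    rw [hBB0, finrank_bot, Nat.add_zero] at h
    rw [← h]
    exact Submodule.finrank_mono (sup_le inf_le_left inf_le_left)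
  have e00 := eqij 0 0; have e01 := eqij 0 1
  have e10 := eqij 1 0; have e11 := eqij 1 1
  have d00 : Module.finrank K ((Ft ⊓ V 0) ⊓ (Ft ⊓ W 0) : Submodule K E) = 0 := by omega
  have d01 : Module.finrank K ((Ft ⊓ V 0) ⊓ (Ft ⊓ W 1) : Submodule K E) = 0 := by omega
  have d10 : Module.finrank K ((Ft ⊓ V 1) ⊓ (Ft ⊓ W 0) : Submodule K E) = 0 := by omega
  have d11 : Module.finrank K ((Ft ⊓ V 1) ⊓ (Ft ⊓ W 1) : Submodule K E) = 0 := by omega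
  have hdisjAB : ∀ i j : Fin 2, Disjoint (Ft ⊓ V i) (Ft ⊓ W j) := by
    intro i j
    rw [disjoint_iff, ← Submodule.finrank_eq_zero (R := K)]
    match i, j with
    | 0, 0 => exact d00
    | 0, 1 => exact d01
    | 1, 0 => exact d10
    | 1, 1 => exact d11
  refine ⟨⟨disjoint_iff.mpr hAB0, ?_⟩, ⟨disjoint_iff.mpr hBB0, ?_⟩,
    fun i j => ⟨hdisjAB i j, key i j⟩⟩
  · apply Submodule.eq_of_le_of_finrank_le (sup_le inf_le_left inf_le_left)
    have h := Submodule.finrank_sup_add_finrank_inf_eq (Ft ⊓ V 0) (Ft ⊓ V 1)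
    rw [hAB0, finrank_bot, Nat.add_zero] at h
    omega
  · apply Submodule.eq_of_le_of_finrank_le (sup_le inf_le_left inf_le_left)
    have h := Submodule.finrank_sup_add_finrank_inf_eq (Ft ⊓ W 0) (Ft ⊓ W 1)
    rw [hBB0, finrank_bot, Nat.add_zero] at h
    omega
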